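/- Let C be a finite set of complexes and R ⊆ C × C a finite reaction set with (y, y) ∉ R for all y ∈ C. Suppose R is weakly reversible and {R_1, …, R_k} is an incidence independent decomposition of R. Then each subnetwork is weakly reversible, i.e., each R_i is a weakly reversible subset of reactions. -/

import Mathlib

set_option linter.unusedSectionVars false
set_option linter.unusedVariables false

open Finset

section helpers

variable {C : Type*} [Fintype C] [DecidableEq C]

noncomputable def incVec (p : C × C) : C → ℝ :=
  Pi.single p.2 (1 : ℝ) - Pi.single p.1 (1 : ℝ)

lemma list_flow {α C : Type*} [Fintype α] [DecidableEq α] (l : List α)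
    (v : α → C → ℝ) :
    ∃ m : α → ℕ, (∀ a, m a ≠ 0 → a ∈ l) ∧ ∑ a : α, (m a : ℝ) • v a = (l.map v).sum := by
  induction l with
  | nil => exact ⟨fun _ => 0, by simp, by simp⟩
  | cons q l ih =>
      obtain ⟨m, hm, hms⟩ := ih
      refine ⟨fun a => m a + if a = q then 1 else 0, ?_, ?_⟩
      · intro a ha
        by_cases h : a = q
        · simp [h]
        · simp only [h, if_false, add_zero] at ha
          exact List.mem_cons_of_mem _ (hm a ha)
      · have h2 : ∀ a : α, ((if a = q then 1 else 0 : ℕ) : ℝ) • v a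
            = if a = q then v a else 0 := by
          intro a; split <;> simp
        simp only [Nat.cast_add, add_smul, Finset.sum_add_distrib, hms, h2,
          Finset.sum_ite_eq', Finset.mem_univ, if_true, List.map_cons, List.sum_cons]
        abel

lemma path_list {R : Finset (C × C)} {x z : C}
    (h : Relation.ReflTransGen (fun a b => (a, b) ∈ R) x z) :
    ∃ l : List (C × C), (∀ p ∈ l, p ∈ R) ∧
      (l.map incVec).sum = Pi.single z (1 : ℝ) - Pi.single x 1 := by
  induction h with
  | refl => exact ⟨[], by simp, by simp⟩
  | tail _ hstep ih =>
      obtain ⟨l, hl, hsum⟩ := ih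
      rename_i b c _
      refine ⟨l ++ [(b, c)], ?_, ?_⟩
      · intro p hp
        rcases List.mem_append.1 hp with hp | hp
        · exact hl p hp
        · simp at hp; subst hp; exact hstep
      · simp only [List.map_append, List.sum_append, hsum, List.map_cons, List.map_nil,
          List.sum_cons, List.sum_nil, add_zero, incVec]
        abel

lemma indep_sum_eq_zero {ι M : Type*} [DecidableEq ι] [AddCommGroup M] [Module ℝ M]
    {V : ι → Submodule ℝ M} (h : iSupIndep V) (s : Finset ι) (v : ι → M)
    (hv : ∀ i ∈ s, v i ∈ V i) (hs : ∑ i ∈ s, v i = 0) : ∀ i ∈ s, v i = 0 := by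
  intro i hi
  have h1 : v i + ∑ j ∈ s.erase i, v j = 0 := by
    rw [Finset.add_sum_erase _ _ hi]; exact hs
  have h2 : ∑ j ∈ s.erase i, v j ∈ ⨆ j ≠ i, V j := by
    refine Submodule.sum_mem _ fun j hj => ?_
    have hji : j ≠ i := (Finset.mem_erase.1 hj).1
    exact Submodule.mem_iSup_of_mem j
      (Submodule.mem_iSup_of_mem hji (hv j (Finset.mem_erase.1 hj).2))
  have h3 : v i ∈ ⨆ j ≠ i, V j := by
    have heq : v i = -∑ j ∈ s.erase i, v j := by
      rw [eq_neg_iff_add_eq_zero]; exact h1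
    rw [heq]; exact neg_mem h2
  exact (Submodule.mem_bot ℝ).1 ((h i).le_bot ⟨hv i hi, h3⟩)

end helpers

section flow

variable {C : Type*} [Fintype C] [DecidableEq C]

lemma cons_of_flow (g : C × C → ℕ)
    (hzero : ∑ q : C × C, (g q : ℝ) • incVec q = 0) (v : C) :
    ∑ p ∈ univ.filter (fun p : C × C => p.2 = v), g p
      = ∑ p ∈ univ.filter (fun p : C × C => p.1 = v), g p := by
  have h := congrFun hzero v
  rw [Finset.sum_apply] at h
  simp only [Pi.smul_apply, incVec, Pi.sub_apply, Pi.single_apply, smul_eq_mul, mul_sub, mul_ite, mul_one, mul_zero, Pi.zero_apply] at h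
  rw [Finset.sum_sub_distrib, sub_eq_zero] at h
  have key : ∀ sel : C × C → C, (∑ q : C × C, if v = sel q then ((g q : ℝ)) else 0)
      = ((∑ p ∈ univ.filter (fun p : C × C => sel p = v), g p : ℕ) : ℝ) := by
    intro sel
    rw [Nat.cast_sum, Finset.sum_filter]
    exact Finset.sum_congr rfl fun q _ => if_congr eq_comm rfl rfl
  rw [key (fun q => q.2), key (fun q => q.1)] at h
  exact_mod_cast h

lemma reach_of_flow (g : C × C → ℕ)
    (hzero : ∑ q : C × C, (g q : ℝ) • incVec q = 0)
    {y y' : C} (hg : g (y, y') ≠ 0) :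
    Relation.ReflTransGen (fun a b => g (a, b) ≠ 0) y' y := by
  classical
  by_contra hy
  set S : Finset C := univ.filter
    (fun c => Relation.ReflTransGen (fun a b => g (a, b) ≠ 0) y' c) with hS
  have hy' : y' ∈ S := by
    simp only [hS, Finset.mem_filter, Finset.mem_univ, true_and]
    exact Relation.ReflTransGen.refl
  have hyS : y ∉ S := by simp [hS]; exact hy
  have hA : ∑ p ∈ univ.filter (fun p : C × C => p.2 ∈ S), g p
      = ∑ p ∈ univ.filter (fun p : C × C => p.1 ∈ S), g p := by
    rw [← Finset.sum_fiberwise_eq_sum_filter univ S (fun p : C × C => p.2) g,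
        ← Finset.sum_fiberwise_eq_sum_filter univ S (fun p : C × C => p.1) g]
    exact Finset.sum_congr rfl fun v _ => cons_of_flow g hzero v
  have hclose : ∀ p : C × C, p.1 ∈ S → g p ≠ 0 → p.2 ∈ S := by
    intro p hp hgp
    simp only [hS, Finset.mem_filter, Finset.mem_univ, true_and] at hp ⊢
    exact hp.tail hgp
  have hB : ∑ p ∈ univ.filter (fun p : C × C => p.1 ∈ S), g p
      = ∑ p ∈ univ.filter (fun p : C × C => p.2 ∈ S ∧ p.1 ∈ S), g p := by
    apply (Finset.sum_subset ?_ ?_).symm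
    · intro p hp
      simp only [Finset.mem_filter, Finset.mem_univ, true_and] at hp ⊢
      exact hp.2
    · intro p hp hnp
      simp only [Finset.mem_filter, Finset.mem_univ, true_and] at hp hnp
      by_contra hgz
      exact hnp ⟨hclose p hp hgz, hp⟩
  have hC : ∑ p ∈ univ.filter (fun p : C × C => p.2 ∈ S ∧ p.1 ∈ S), g p
      + ∑ p ∈ univ.filter (fun p : C × C => p.2 ∈ S ∧ p.1 ∉ S), g p
      = ∑ p ∈ univ.filter (fun p : C × C => p.2 ∈ S), g p := by
    rw [← Finset.filter_filter, ← Finset.filter_filter,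
      Finset.sum_filter_add_sum_filter_not]
  have h0 : ∑ p ∈ univ.filter (fun p : C × C => p.2 ∈ S ∧ p.1 ∉ S), g p = 0 := by
    omega
  have hmem : (y, y') ∈ univ.filter (fun p : C × C => p.2 ∈ S ∧ p.1 ∉ S) := by
    simp only [Finset.mem_filter, Finset.mem_univ, true_and]
    exact ⟨hy', hyS⟩
  exact hg (Finset.sum_eq_zero_iff.1 h0 _ hmem)

end flow



/-- A set `E` of reactions is weakly reversible if for every reaction `(y, y') ∈ E`, the
complex `y` is reachable from `y'` under the reflexive-transitive closure of the relation
"there is a reaction in `E` from `a` to `b`". -/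
def WeaklyReversible {C : Type*} (E : Finset (C × C)) : Prop :=
  ∀ p ∈ E, Relation.ReflTransGen (fun a b => (a, b) ∈ E) p.2 p.1

/-- A decomposition of the reaction set `R`: a collection of nonempty pairwise disjoint
subsets of `R` whose union is `R`. -/
def IsDecompositionOf {C : Type*} [DecidableEq C] (R : Finset (C × C))
    (D : Finset (Finset (C × C))) : Prop :=
  (∀ E ∈ D, E.Nonempty) ∧ (D : Set (Finset (C × C))).PairwiseDisjoint id ∧ D.sup id = R

/-- The range of the restriction of the incidence map to the functions supported on a
reaction subset `E`: the span of the incidence vectors `e_{y'} - e_y` for `(y, y') ∈ E`. -/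
def incidenceSpan {C : Type*} [DecidableEq C] (E : Finset (C × C)) :
    Submodule ℝ (C → ℝ) :=
  Submodule.span ℝ
    ((fun p : C × C => (Pi.single p.2 (1 : ℝ) - Pi.single p.1 (1 : ℝ))) '' (E : Set (C × C)))

/-- A decomposition is incidence independent if the range of the incidence map is the
internal direct sum of the ranges of the restricted incidence maps of the blocks. -/
def IsIncidenceIndependent {C : Type*} [DecidableEq C] (R : Finset (C × C))
    (D : Finset (Finset (C × C))) : Prop :=
  iSupIndep (fun E : {E // E ∈ D} => incidenceSpan (E : Finset (C × C))) ∧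
    (⨆ E : {E // E ∈ D}, incidenceSpan (E : Finset (C × C))) = incidenceSpan R

/-- If `R` is weakly reversible and `{R₁, …, R_k}` is an incidence independent
decomposition of `R`, then each `Rᵢ` is weakly reversible. -/
theorem weaklyReversible_of_incidenceIndependent
    {C : Type*} [Fintype C] [DecidableEq C]
    (R : Finset (C × C)) (hloop : ∀ y : C, (y, y) ∉ R)
    (hWR : WeaklyReversible R) (D : Finset (Finset (C × C)))
    (hD : IsDecompositionOf R D) (hInc : IsIncidenceIndependent R D) :
    ∀ E ∈ D, WeaklyReversible E := by
  classical
  intro E hE p hp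
  obtain ⟨y, y'⟩ := p
  simp only at hp ⊢
  have hER : E ⊆ R := by
    rw [← hD.2.2]
    exact Finset.le_sup (f := id) hE
  have hpR : (y, y') ∈ R := hER hp
  obtain ⟨l, hl, hsum⟩ := path_list (hWR _ hpR)
  obtain ⟨m, hm, hms⟩ := list_flow l incVec
  set f : C × C → ℕ := fun q => m q + (if q = (y, y') then 1 else 0) with hf
  have hfsum : ∑ q : C × C, (f q : ℝ) • incVec q = 0 := by
    have h2 : ∀ q : C × C, ((if q = (y, y') then 1 else 0 : ℕ) : ℝ) • incVec q
        = if q = (y, y') then incVec q else 0 := by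
      intro q; split <;> simp
    simp only [hf, Nat.cast_add, add_smul, Finset.sum_add_distrib]
    rw [hms, hsum]
    simp only [h2, Finset.sum_ite_eq', Finset.mem_univ, if_true]
    simp only [incVec]
    abel
  have hfR : ∀ q, f q ≠ 0 → q ∈ R := by
    intro q hq
    simp only [hf] at hq
    by_cases h : q = (y, y')
    · subst h; exact hpR
    · simp only [h, if_false, add_zero] at hq
      exact hl q (hm q hq)
  -- group the sum by blocks
  have hgroup : ∑ E' ∈ D, (∑ q ∈ E', (f q : ℝ) • incVec q) = 0 := by
    have key : ∑ q ∈ D.biUnion id, (f q : ℝ) • incVec q = 0 := by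
      rw [← Finset.sup_eq_biUnion, hD.2.2, ← hfsum]
      apply Finset.sum_subset (Finset.subset_univ R)
      intro q _ hq
      have : f q = 0 := by
        by_contra h
        exact hq (hfR q h)
      simp [this]
    rw [Finset.sum_biUnion hD.2.1] at key
    simpa using key
  -- each block sum is zero by independence
  have hEzero : ∑ q ∈ E, (f q : ℝ) • incVec q = 0 := by
    have := indep_sum_eq_zero hInc.1 (Finset.univ : Finset {E // E ∈ D})
      (fun E' => ∑ q ∈ (E' : Finset (C × C)), (f q : ℝ) • incVec q)
      (fun E' _ => Submodule.sum_mem _ fun q hq =>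
        Submodule.smul_mem _ _ (Submodule.subset_span (Set.mem_image_of_mem _ hq)))
      (by rw [Finset.sum_coe_sort D (fun E' => ∑ q ∈ E', (f q : ℝ) • incVec q)]; exact hgroup)
      ⟨E, hE⟩ (Finset.mem_univ _)
    exact this
  -- restrict f to E
  set g : C × C → ℕ := fun q => if q ∈ E then f q else 0 with hg
  have hgzero : ∑ q : C × C, (g q : ℝ) • incVec q = 0 := by
    rw [← hEzero]
    apply (Finset.sum_subset (Finset.subset_univ E) ?_).symm.trans ?_
    · intro q _ hq
      simp [hg, hq]
    · exact Finset.sum_congr rfl fun q hq => by simp [hg, hq]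
  have hgyy' : g (y, y') ≠ 0 := by
    simp [hg, hp, hf]
  have hreach := reach_of_flow g hgzero hgyy'
  refine Relation.ReflTransGen.mono ?_ _ _ hreach
  intro a b hab
  by_contra h
  simp [hg, h] at hab
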